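/- Let S, T be E0-large trees, n < ω, and h = spl_n(T). Then the following are equivalent: (a) S ⊆_n T; (b) S→s ⊆ T→s for every string s of length ≤ n; (c) S ⊆ T and S ∩ 2^h = T ∩ 2^h. -/

import Mathlib

namespace E0L

/-- Finite binary strings `2^{<ω}`. -/
abbrev Str : Type := List Bool

/-- Sets of binary strings (in particular, trees). -/
abbrev Tr : Type := Set Str

/-- The action `s·t` of a string on a string:
`(s·t)(k) = t(k) + s(k) mod 2` for `k < min(|s|,|t|)` and `(s·t)(k) = t(k)` otherwise. -/
def act (s t : Str) : Str := List.ofFn fun k : Fin t.length => Bool.xor (s.getD k false) (t.get k)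

/-- The action `s·T` of a string on a set of strings. -/
def actT (s : Str) (T : Tr) : Tr := (act s) '' T

/-- `T ↾ s = {t ∈ T : s ⊆ t or t ⊆ s}`. -/
def restr (T : Tr) (s : Str) : Tr := {t ∈ T | s <+: t ∨ t <+: s}

/-- `[T]`, the set of infinite branches of `T` (as elements of Cantor space `2^ω`). -/
def branches (T : Tr) : Set (ℕ → Bool) := {x | ∀ n : ℕ, (List.ofFn fun k : Fin n => x k) ∈ T}

/-- `T[s] = {t : s ⊆ t or t ⊂ s}`. -/
def Tbr (s : Str) : Tr := {t | s <+: t ∨ (t <+: s ∧ t ≠ s)}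

/-- `LTwit T r q` : the strings `q i n` witness that `T` is an E0-large tree with stem `r`:
`|q^0_n| = |q^1_n| ≥ 1`, `q^i_n(0) = i`, and `T` consists of all initial segments of strings
of the form `r⌢q^{i(0)}_0⌢…⌢q^{i(n)}_n`. -/
def LTwit (T : Tr) (r : Str) (q : ℕ → Bool → Str) : Prop :=
  (∀ n : ℕ, (q n true).length = (q n false).length ∧ 1 ≤ (q n false).length) ∧
  (∀ n : ℕ, ∀ i : Bool, (q n i).head? = some i) ∧
  T = {t | ∃ n : ℕ, ∃ f : ℕ → Bool,
        t <+: r ++ ((List.range (n+1)).map (fun k => q k (f k))).flatten}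

/-- `T` is an E0-large tree (`T ∈ LT`). -/
def IsLT (T : Tr) : Prop := ∃ r q, LTwit T r q

/-- `stem T` : the longest `s ∈ T` with `T = T↾s`. -/
noncomputable def stem (T : Tr) : Str :=
  Classical.epsilon fun s => s ∈ T ∧ restr T s = T ∧ ∀ t ∈ T, restr T t = T → t.length ≤ s.length

/-- The canonical witness `(r, q)` of an E0-large tree. -/
noncomputable def witness (T : Tr) : Str × (ℕ → Bool → Str) :=
  Classical.epsilon fun rq => LTwit T rq.1 rq.2

/-- Splitting levels computed from a witness: `spl_0 = |r|`, `spl_{n+1} = spl_n + |q^i_n|`. -/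
def splN (r : Str) (q : ℕ → Bool → Str) : ℕ → ℕ
  | 0 => r.length
  | n+1 => splN r q n + (q n false).length

/-- `spl T n`, the `n`-th splitting level of an E0-large tree `T`. -/
noncomputable def spl (T : Tr) (n : ℕ) : ℕ := splN (witness T).1 (witness T).2 n

/-- Simple splitting `T→i = T↾(stem(T)⌢i)`. -/
noncomputable def split1 (T : Tr) (i : Bool) : Tr := restr T (stem T ++ [i])

/-- Iterated splitting `T→s`: `T→Λ = T`, `T→(s⌢i) = (T→s)→i`. -/
noncomputable def splitS (T : Tr) (s : Str) : Tr := s.foldl split1 T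

/-- `S ⊆_n T` : `S ⊆ T` and `spl_k(S) = spl_k(T)` for all `k < n`. -/
def subN (n : ℕ) (S T : Tr) : Prop := S ⊆ T ∧ ∀ k < n, spl S k = spl T k

/-- A large-tree forcing notion: a set of E0-large trees closed under restriction
and under the action of strings. -/
def IsLTF (P : Set Tr) : Prop :=
  (∀ T ∈ P, IsLT T) ∧
  (∀ T ∈ P, ∀ u ∈ T, restr T u ∈ P) ∧
  (∀ T ∈ P, ∀ s : Str, actT s T ∈ P)

/-- `T` is an `n`-collage over `P`: `T ∈ LT` and `T→s ∈ P` for all `s ∈ 2^n`. -/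
def IsCollage (P : Set Tr) (n : ℕ) (T : Tr) : Prop :=
  IsLT T ∧ ∀ s : Str, s.length = n → splitS T s ∈ P

/-- `D` is open dense in `P` (as a set of trees). -/
def OpenDense1 (P D : Set Tr) : Prop :=
  D ⊆ P ∧ (∀ S ∈ P, ∃ T ∈ D, T ⊆ S) ∧ (∀ S ∈ P, ∀ T ∈ D, S ⊆ T → S ∈ D)

/-- `⟨T,T'⟩` is a condition of the conditional product `P ×_{E0} P`. -/
def CondPair (P : Set Tr) (p : Tr × Tr) : Prop :=
  p.1 ∈ P ∧ p.2 ∈ P ∧ ∃ s : Str, actT s p.1 = p.2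

/-- Componentwise order on pairs of trees: `p ≤ q`. -/
def pleq (p q : Tr × Tr) : Prop := p.1 ⊆ q.1 ∧ p.2 ⊆ q.2

/-- Compatibility of two conditions in `P ×_{E0} P`. -/
def Compat (P : Set Tr) (p q : Tr × Tr) : Prop :=
  ∃ r : Tr × Tr, CondPair P r ∧ pleq r p ∧ pleq r q

/-- `D` is pre-dense in `P ×_{E0} P`. -/
def PreDense2 (P : Set Tr) (D : Set (Tr × Tr)) : Prop :=
  ∀ p : Tr × Tr, CondPair P p → ∃ q ∈ D, Compat P p q

/-- `D` is open dense in `P ×_{E0} P`. -/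
def OpenDense2 (P : Set Tr) (D : Set (Tr × Tr)) : Prop :=
  D ⊆ {p | CondPair P p} ∧
  (∀ p : Tr × Tr, CondPair P p → ∃ q ∈ D, pleq q p) ∧
  (∀ p : Tr × Tr, CondPair P p → ∀ q ∈ D, pleq p q → p ∈ D)

/-- A `P ×_{E0} P`-real name `c = ⟨C_n^i⟩`. -/
def IsRealName (P : Set Tr) (c : ℕ → Bool → Set (Tr × Tr)) : Prop :=
  (∀ n : ℕ, ∀ i : Bool, c n i ⊆ {p | CondPair P p}) ∧
  (∀ n : ℕ, PreDense2 P (c n false ∪ c n true)) ∧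
  (∀ n : ℕ, ∀ p ∈ c n false, ∀ q ∈ c n true, ¬ Compat P p q)

/-- `p` directly forces `c(n) = i`. -/
def DFVal (c : ℕ → Bool → Set (Tr × Tr)) (p : Tr × Tr) (n : ℕ) (i : Bool) : Prop :=
  ∃ q ∈ c n i, pleq p q

/-- `p` directly forces `s ⊂ c`. -/
def DFPrefix (c : ℕ → Bool → Set (Tr × Tr)) (p : Tr × Tr) (s : Str) : Prop :=
  ∀ n < s.length, DFVal c p n (s.getD n false)

/-- `p` directly forces `c ∉ [U]`. -/
def DFAvoid (c : ℕ → Bool → Set (Tr × Tr)) (p : Tr × Tr) (U : Tr) : Prop :=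
  ∃ s : Str, s ∉ U ∧ DFPrefix c p s

/-- `p` directly forces `c ≠ d`: there are incomparable strings `s, t` such that
`p` directly forces `s ⊂ c` and `t ⊂ d`. -/
def DFNe (c d : ℕ → Bool → Set (Tr × Tr)) (p : Tr × Tr) : Prop :=
  ∃ s t : Str, ¬ s <+: t ∧ ¬ t <+: s ∧ DFPrefix c p s ∧ DFPrefix d p t

/-- The action `σ·c` of a string on a real name. -/
def actName (σ : Str) (c : ℕ → Bool → Set (Tr × Tr)) : ℕ → Bool → Set (Tr × Tr) :=
  fun n i => if σ.getD n false = true then c n (!i) else c n i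

/-- The name `π_left` of the left generic real. -/
def piLeft : ℕ → Bool → Set (Tr × Tr) := fun n i =>
  {p | ∃ s t : Str, s.length = n+1 ∧ t.length = n+1 ∧ s.getD n false = i ∧ p = (Tbr s, Tbr t)}

/-- The name `π_right` of the right generic real. -/
def piRight : ℕ → Bool → Set (Tr × Tr) := fun n i =>
  {p | ∃ s t : Str, s.length = n+1 ∧ t.length = n+1 ∧ t.getD n false = i ∧ p = (Tbr s, Tbr t)}


/-! ### Auxiliary development for `stmt6` -/

/-- The "partial branch" `r ⌢ q_0(f 0) ⌢ … ⌢ q_{m-1}(f (m-1))`. -/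
def Bp (r : Str) (q : ℕ → Bool → Str) (f : ℕ → Bool) (m : ℕ) : Str :=
  r ++ ((List.range m).map fun k => q k (f k)).flatten

lemma comp_of {a b c : Str} (h1 : a <+: c) (h2 : b <+: c) : a <+: b ∨ b <+: a := by
  rcases le_total a.length b.length with h | h
  · exact Or.inl (List.prefix_of_prefix_length_le h1 h2 h)
  · exact Or.inr (List.prefix_of_prefix_length_le h2 h1 h)

lemma getD_of_prefix {a b : Str} (h : a <+: b) {p : ℕ} (hp : p < a.length) :
    b.getD p false = a.getD p false := by
  rw [List.getD_eq_getElem _ _ (lt_of_lt_of_le hp h.length_le),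
    List.getD_eq_getElem _ _ hp, h.getElem hp]

lemma getD_concat {a : Str} (i : Bool) : (a ++ [i]).getD a.length false = i := by
  rw [List.getD_eq_getElem _ _ (by simp), List.getElem_concat_length rfl]

lemma snoc_prefix_of {a b : Str} (h : a <+: b) (hp : a.length < b.length) :
    a ++ [b.getD a.length false] <+: b := by
  have h1 : a = b.take a.length := List.prefix_iff_eq_take.1 h
  have h2 : a ++ [b.getD a.length false] = b.take (a.length + 1) := by
    conv_rhs => rw [← List.take_concat_get (l := b) (i := a.length) hp]
    rw [List.concat_eq_append, ← h1, List.getD_eq_getElem _ _ hp]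
  rw [h2]; exact List.take_prefix _ _

section OneTree

variable {T : Tr} {r : Str} {q : ℕ → Bool → Str}

lemma qlen (hw : LTwit T r q) (k : ℕ) (i : Bool) : (q k i).length = (q k false).length := by
  cases i
  · rfl
  · exact (hw.1 k).1

lemma qne (hw : LTwit T r q) (k : ℕ) (i : Bool) : 0 < (q k i).length := by
  rw [qlen hw]; exact (hw.1 k).2

lemma qcons (hw : LTwit T r q) (k : ℕ) (i : Bool) : q k i = i :: (q k i).tail := by
  have := hw.2.1 k i
  cases h : q k i <;> simp_all

lemma qhead (hw : LTwit T r q) (k : ℕ) (i : Bool) : (q k i).getD 0 false = i := by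
  conv_lhs => rw [qcons hw k i]
  rfl

lemma cons_prefix_q (hw : LTwit T r q) (k : ℕ) (i : Bool) : [i] <+: q k i := by
  rw [qcons hw k i]; simp

lemma splN_succ (m : ℕ) : splN r q (m + 1) = splN r q m + (q m false).length := rfl

lemma splN_strict (hw : LTwit T r q) : StrictMono (splN r q) := by
  apply strictMono_nat_of_lt_succ
  intro m
  have := (hw.1 m).2
  have h : splN r q (m+1) = splN r q m + (q m false).length := rfl
  omega

lemma le_splN (hw : LTwit T r q) (m : ℕ) : m ≤ splN r q m := by
  induction m with
  | zero => exact Nat.zero_le _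
  | succ m ih =>
    have := (hw.1 m).2
    have h : splN r q (m+1) = splN r q m + (q m false).length := rfl
    omega

lemma Bp_zero (f : ℕ → Bool) : Bp r q f 0 = r := by simp [Bp]

lemma Bp_succ (f : ℕ → Bool) (m : ℕ) : Bp r q f (m + 1) = Bp r q f m ++ q m (f m) := by
  simp [Bp, List.range_succ]

lemma Bp_length (hw : LTwit T r q) (f : ℕ → Bool) (m : ℕ) :
    (Bp r q f m).length = splN r q m := by
  induction m with
  | zero => simp [Bp_zero, splN]
  | succ m ih => rw [Bp_succ, List.length_append, ih, qlen hw, splN_succ]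

lemma Bp_mono (f : ℕ → Bool) {m m' : ℕ} (h : m ≤ m') : Bp r q f m <+: Bp r q f m' := by
  induction m', h using Nat.le_induction with
  | base => exact List.prefix_refl _
  | succ m' hm ih => exact ih.trans (by rw [Bp_succ]; exact List.prefix_append _ _)

lemma Bp_congr {f g : ℕ → Bool} (m : ℕ) (h : ∀ j < m, f j = g j) :
    Bp r q f m = Bp r q g m := by
  unfold Bp
  congr 1
  congr 1
  apply List.map_congr_left
  intro a ha
  rw [h a (List.mem_range.1 ha)]

lemma mem_iff (hw : LTwit T r q) {t : Str} :
    t ∈ T ↔ ∃ n f, t <+: Bp r q f (n + 1) := by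
  rw [hw.2.2]; exact Iff.rfl

lemma mem_Bp (hw : LTwit T r q) (f : ℕ → Bool) (m : ℕ) : Bp r q f m ∈ T :=
  (mem_iff hw).2 ⟨m, f, Bp_mono f (Nat.le_succ m)⟩

lemma stem_mem' (hw : LTwit T r q) : r ∈ T := by
  have := mem_Bp hw (fun _ => false) 0
  rwa [Bp_zero] at this

lemma mem_down (hw : LTwit T r q) {t s : Str} (ht : t ∈ T) (hs : s <+: t) : s ∈ T := by
  obtain ⟨n, f, hp⟩ := (mem_iff hw).1 ht
  exact (mem_iff hw).2 ⟨n, f, hs.trans hp⟩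

lemma mem_comp_stem (hw : LTwit T r q) {t : Str} (ht : t ∈ T) : t <+: r ∨ r <+: t := by
  obtain ⟨n, f, hp⟩ := (mem_iff hw).1 ht
  have hr : r <+: Bp r q f (n + 1) := by
    have := Bp_mono (r := r) (q := q) f (Nat.zero_le (n + 1))
    rwa [Bp_zero] at this
  exact comp_of hp hr

lemma mem_extend (hw : LTwit T r q) {t : Str} (ht : t ∈ T) {m : ℕ} (hm : t.length ≤ m) :
    ∃ v, v ∈ T ∧ t <+: v ∧ v.length = m := by
  obtain ⟨n, f, hp⟩ := (mem_iff hw).1 ht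
  set N := max (n + 1) m with hN
  have h1 : t <+: Bp r q f N := hp.trans (Bp_mono f (le_max_left _ _))
  have h2 : m ≤ (Bp r q f N).length := by
    rw [Bp_length hw]
    exact le_trans (le_max_right (n+1) m) (le_splN hw N)
  refine ⟨(Bp r q f N).take m, mem_down hw (mem_Bp hw f N) (List.take_prefix _ _), ?_, ?_⟩
  · exact List.prefix_of_prefix_length_le h1 (List.take_prefix _ _)
      (by rw [List.length_take]; omega)
  · rw [List.length_take]; omega

lemma Bp_take (hw : LTwit T r q) (f : ℕ → Bool) {k m : ℕ} (h : k ≤ m) :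
    (Bp r q f m).take (splN r q k) = Bp r q f k := by
  have h1 := List.prefix_iff_eq_take.1 (Bp_mono (r := r) (q := q) f h)
  rw [Bp_length hw] at h1
  exact h1.symm

lemma Bp_getD (hw : LTwit T r q) (f : ℕ → Bool) {j m d : ℕ} (hj : j < m)
    (hd : d < (q j (f j)).length) :
    (Bp r q f m).getD (splN r q j + d) false = (q j (f j)).getD d false := by
  obtain ⟨tl, htl⟩ := Bp_mono (r := r) (q := q) f (show j + 1 ≤ m from hj)
  have hlt : splN r q j + d < (Bp r q f (j+1)).length := by
    rw [Bp_length hw, splN_succ, qlen hw j (f j)] at *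
    omega
  have h1 : (Bp r q f m).getD (splN r q j + d) false
      = (Bp r q f (j+1)).getD (splN r q j + d) false := by
    rw [← htl, List.getD_eq_getElem _ _ hlt,
      List.getD_eq_getElem _ _ (by rw [List.length_append]; omega),
      List.getElem_append_left hlt]
  rw [h1, Bp_succ]
  have hlen : (Bp r q f j).length = splN r q j := Bp_length hw f j
  rw [List.getD_eq_getElem _ _ (by rw [List.length_append, hlen]; omega),
    List.getD_eq_getElem _ _ hd]
  rw [List.getElem_append_right (by omega)]
  congr 1
  omega

lemma Bp_head (hw : LTwit T r q) (f : ℕ → Bool) {j m : ℕ} (hj : j < m) :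
    (Bp r q f m).getD (splN r q j) false = f j := by
  have := Bp_getD hw f hj (qne hw j (f j))
  rw [Nat.add_zero] at this
  rw [this, qhead hw]

lemma splitnode (hw : LTwit T r q) {t : Str} {k : ℕ} (ht : t ∈ T)
    (hl : t.length = splN r q k) (i : Bool) : t ++ [i] ∈ T := by
  obtain ⟨n, f, hp⟩ := (mem_iff hw).1 ht
  set N := max (n + 1) k with hN
  have hp' : t <+: Bp r q f N := hp.trans (Bp_mono f (le_max_left _ _))
  have htf : t = Bp r q f k := by
    have h1 := List.prefix_iff_eq_take.1 hp'
    rw [hl] at h1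
    rw [h1, Bp_take hw f (le_max_right (n+1) k)]
  set g : ℕ → Bool := fun j => if j = k then i else f j with hg
  have htg : t = Bp r q g k := by
    rw [htf]
    exact Bp_congr k (fun j hj => by simp [hg, Nat.ne_of_lt hj])
  have hmem : t ++ [i] <+: Bp r q g (k + 1) := by
    rw [Bp_succ, ← htg]
    have : g k = i := by simp [hg]
    rw [this]
    exact (List.prefix_append_right_inj t).2 (cons_prefix_q hw k i)
  exact (mem_iff hw).2 ⟨k, g, hmem⟩

lemma exists_block (hw : LTwit T r q) {x : ℕ} (h0 : splN r q 0 ≤ x) :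
    ∃ k, splN r q k ≤ x ∧ x < splN r q (k + 1) := by
  have hex : ∃ k, x < splN r q (k + 1) :=
    ⟨x, lt_of_lt_of_le (Nat.lt_succ_self x) (le_splN hw (x + 1))⟩
  classical
  set k := Nat.find hex with hk
  refine ⟨k, ?_, Nat.find_spec hex⟩
  rcases Nat.eq_zero_or_pos k with h | h
  · rw [h]; exact h0
  · have := Nat.find_min hex (show k - 1 < k by omega)
    have hkk : k - 1 + 1 = k := by omega
    rw [hkk] at this
    omega

lemma splitlevel (hw : LTwit T r q) {t : Str} (ht0 : t ++ [false] ∈ T)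
    (ht1 : t ++ [true] ∈ T) : ∃ k, t.length = splN r q k := by
  obtain ⟨n0, f0, hp0⟩ := (mem_iff hw).1 ht0
  obtain ⟨n1, f1, hp1⟩ := (mem_iff hw).1 ht1
  have hbit : ∀ (i : Bool) (nf : ℕ × (ℕ → Bool)),
      t ++ [i] <+: Bp r q nf.2 (nf.1 + 1) →
      (Bp r q nf.2 (nf.1 + 1)).getD t.length false = i := by
    intro i nf hp
    have hlt : t.length < (t ++ [i]).length := by simp
    rw [getD_of_prefix hp hlt, getD_concat]
  have hb0 := hbit false (n0, f0) hp0
  have hb1 := hbit true (n1, f1) hp1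
  -- t.length ≥ |r|
  have hr : splN r q 0 ≤ t.length := by
    by_contra hc
    push_neg at hc
    have hrp : ∀ (nf : ℕ × (ℕ → Bool)), (Bp r q nf.2 (nf.1 + 1)).getD t.length false
        = r.getD t.length false := by
      intro nf
      have hr' : r <+: Bp r q nf.2 (nf.1 + 1) := by
        have := Bp_mono (r := r) (q := q) nf.2 (Nat.zero_le (nf.1 + 1))
        rwa [Bp_zero] at this
      exact getD_of_prefix hr' hc
    rw [hrp (n0, f0)] at hb0
    rw [hrp (n1, f1)] at hb1
    rw [hb0] at hb1
    exact Bool.noConfusion hb1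
  obtain ⟨k, hk1, hk2⟩ := exists_block hw hr
  rcases Nat.eq_or_lt_of_le hk1 with heq | hlt
  · exact ⟨k, heq.symm⟩
  -- strictly inside a block: contradiction
  exfalso
  have hkey : ∀ (i : Bool) (nf : ℕ × (ℕ → Bool)), t ++ [i] <+: Bp r q nf.2 (nf.1 + 1) → i =
      (q k (t.getD (splN r q k) false)).getD (t.length - splN r q k) false := by
    intro i nf hp
    have hlen : (t ++ [i]).length ≤ (Bp r q nf.2 (nf.1 + 1)).length := hp.length_le
    rw [Bp_length hw] at hlen
    simp only [List.length_append, List.length_singleton] at hlen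
    have hkn : k < nf.1 + 1 := by
      have := (splN_strict hw).lt_iff_lt (a := k) (b := nf.1 + 1)
      omega
    have hf : nf.2 k = t.getD (splN r q k) false := by
      have h1 := Bp_head hw nf.2 hkn
      have h2 : (Bp r q nf.2 (nf.1 + 1)).getD (splN r q k) false
          = t.getD (splN r q k) false := by
        have hpre : t <+: Bp r q nf.2 (nf.1 + 1) := (List.prefix_append t [i]).trans hp
        exact getD_of_prefix hpre hlt
      rw [← h2, h1]
    have hd : t.length - splN r q k < (q k (nf.2 k)).length := by
      rw [qlen hw]
      have := splN_succ (r := r) (q := q) k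
      omega
    have h3 := Bp_getD hw nf.2 hkn hd
    have h4 : splN r q k + (t.length - splN r q k) = t.length := by omega
    rw [h4] at h3
    have h5 := hbit i nf hp
    rw [h5, hf] at h3
    exact h3
  have h0 := hkey false (n0, f0) hp0
  have h1 := hkey true (n1, f1) hp1
  rw [← h0] at h1
  exact Bool.noConfusion h1

lemma agree (hw : LTwit T r q) {v w u : Str} {k : ℕ} (hv : v ∈ T) (hw' : w ∈ T)
    (huv : u <+: v) (huw : u <+: w) (hk : splN r q k < u.length)
    (hv1 : v.length ≤ splN r q (k + 1)) (hw1 : w.length ≤ splN r q (k + 1)) :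
    v <+: w ∨ w <+: v := by
  obtain ⟨n, f, hpv⟩ := (mem_iff hw).1 hv
  obtain ⟨m, g, hpw⟩ := (mem_iff hw).1 hw'
  set N := max n m with hN
  have hpv' : v <+: Bp r q f (N + 1) := hpv.trans (Bp_mono f (by omega))
  have hpw' : w <+: Bp r q g (N + 1) := hpw.trans (Bp_mono g (by omega))
  have hkN : k + 1 ≤ N + 1 := by
    have h1 : u.length ≤ (Bp r q f (N+1)).length := le_trans huv.length_le hpv'.length_le
    rw [Bp_length hw] at h1
    have := (splN_strict hw).lt_iff_lt (a := k) (b := N + 1)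
    omega
  have hulv : u.length ≤ v.length := huv.length_le
  have hulw : u.length ≤ w.length := huw.length_le
  have hfg : ∀ j < k + 1, f j = g j := by
    intro j hj
    have hjk : splN r q j ≤ splN r q k := (splN_strict hw).monotone (by omega)
    have hju : splN r q j < u.length := by omega
    have h1 : (Bp r q f (N+1)).getD (splN r q j) false = u.getD (splN r q j) false := by
      rw [getD_of_prefix hpv' (by omega : splN r q j < v.length),
        getD_of_prefix huv hju]
    have h2 : (Bp r q g (N+1)).getD (splN r q j) false = u.getD (splN r q j) false := by
      rw [getD_of_prefix hpw' (by omega : splN r q j < w.length),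
        getD_of_prefix huw hju]
    have h3 := Bp_head hw f (show j < N + 1 by omega)
    have h4 := Bp_head hw g (show j < N + 1 by omega)
    rw [← h3, ← h4, h1, h2]
  have hBfg : Bp r q f (k+1) = Bp r q g (k+1) := Bp_congr (k+1) hfg
  have hvk : v <+: Bp r q f (k + 1) := by
    apply List.prefix_of_prefix_length_le hpv' ((Bp_mono f hkN))
    rw [Bp_length hw]; exact hv1
  have hwk : w <+: Bp r q f (k + 1) := by
    rw [hBfg]
    apply List.prefix_of_prefix_length_le hpw' ((Bp_mono g hkN))
    rw [Bp_length hw]; exact hw1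
  exact comp_of hvk hwk

lemma restr_stem (hw : LTwit T r q) : restr T r = T := by
  ext t
  constructor
  · exact fun h => h.1
  · intro h
    exact ⟨h, (mem_comp_stem hw h).symm⟩

lemma stem_eq (hw : LTwit T r q) : stem T = r := by
  set P : Str → Prop :=
    fun s => s ∈ T ∧ restr T s = T ∧ ∀ t ∈ T, restr T t = T → t.length ≤ s.length with hP
  have hPr : P r := by
    refine ⟨stem_mem' hw, restr_stem hw, ?_⟩
    intro t ht hres
    by_contra hc
    push_neg at hc
    have hchild : ∀ i : Bool, r ++ [i] <+: t := by
      intro i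
      have hci : r ++ [i] ∈ T := splitnode hw (stem_mem' hw) (k := 0) rfl i
      have : r ++ [i] ∈ restr T t := by rw [hres]; exact hci
      rcases this.2 with h | h
      · have hlen : t.length = (r ++ [i]).length := by
          have := h.length_le
          simp only [List.length_append, List.length_singleton] at this ⊢
          omega
        rw [h.eq_of_length hlen]
      · exact h
    have h0 := hchild false
    have h1 := hchild true
    have : r ++ [false] = r ++ [true] := by
      rcases comp_of h0 h1 with h | h
      · exact h.eq_of_length (by simp)
      · exact (h.eq_of_length (by simp)).symm
    have := List.append_cancel_left this
    simp at this
  have hex : ∃ s, P s := ⟨r, hPr⟩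
  have hstem : P (stem T) := Classical.epsilon_spec hex
  have h1 : (stem T).length ≤ r.length := hPr.2.2 _ hstem.1 hstem.2.1
  have h2 : r.length ≤ (stem T).length := hstem.2.2 r hPr.1 hPr.2.1
  rcases mem_comp_stem hw hstem.1 with h | h
  · exact h.eq_of_length (le_antisymm h.length_le h2)
  · exact (h.eq_of_length (le_antisymm h.length_le h1)).symm

lemma splRange (hw : LTwit T r q) :
    {m | ∃ t, t ∈ T ∧ t.length = m ∧ t ++ [false] ∈ T ∧ t ++ [true] ∈ T}
      = Set.range (splN r q) := by
  ext m
  constructor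
  · rintro ⟨t, _, hlen, h0, h1⟩
    obtain ⟨k, hk⟩ := splitlevel hw h0 h1
    exact ⟨k, by rw [← hk, hlen]⟩
  · rintro ⟨k, hk⟩
    refine ⟨Bp r q (fun _ => false) k, mem_Bp hw _ k, by rw [Bp_length hw, hk], ?_, ?_⟩
    · exact splitnode hw (mem_Bp hw _ k) (Bp_length hw _ k) false
    · exact splitnode hw (mem_Bp hw _ k) (Bp_length hw _ k) true

lemma spl_eq (hw : LTwit T r q) (k : ℕ) : spl T k = splN r q k := by
  have hex : ∃ rq : Str × (ℕ → Bool → Str), LTwit T rq.1 rq.2 := ⟨(r, q), hw⟩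
  have hwW : LTwit T (witness T).1 (witness T).2 := Classical.epsilon_spec hex
  have hrange : Set.range (splN (witness T).1 (witness T).2) = Set.range (splN r q) := by
    rw [← splRange hwW, ← splRange hw]
  have heq := (StrictMono.range_inj (splN_strict hwW) (splN_strict hw)).1 hrange
  exact congrFun heq k

lemma split1_wit (hw : LTwit T r q) (i : Bool) :
    LTwit (split1 T i) (r ++ q 0 i) (fun n => q (n + 1)) := by
  have hshift : ∀ (g : ℕ → Bool) (m : ℕ),
      Bp (r ++ q 0 i) (fun n => q (n + 1)) g m
        = Bp r q (fun j => if j = 0 then i else g (j - 1)) (m + 1) := by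
    intro g m
    induction m with
    | zero => simp [Bp_zero, Bp_succ]
    | succ m ih =>
      conv_rhs => rw [Bp_succ]
      rw [Bp_succ, ih]
      simp
  refine ⟨fun n => hw.1 (n + 1), fun n j => hw.2.1 (n + 1) j, ?_⟩
  have hsp : split1 T i = restr T (r ++ [i]) := by
    rw [split1, stem_eq hw]
  rw [hsp]
  ext t
  constructor
  · rintro ⟨ht, hc⟩
    rcases hc with h | h
    · -- r ++ [i] <+: t
      obtain ⟨n, f, hp⟩ := (mem_iff hw).1 ht
      have hlenr : r.length < t.length := by
        have := h.length_le; simp at this; omega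
      have hf0 : f 0 = i := by
        have h1 : (Bp r q f (n+1)).getD r.length false = t.getD r.length false :=
          getD_of_prefix hp hlenr
        have h2 : t.getD r.length false = i := by
          have h3 := getD_of_prefix h (show r.length < (r ++ [i]).length by simp)
          rw [h3, getD_concat]
        have h4 := Bp_head hw f (Nat.succ_pos n)
        have h5 : splN r q 0 = r.length := rfl
        rw [h5] at h4
        rw [← h4, h1, h2]
      refine ⟨n, fun j => f (j + 1), ?_⟩
      show t <+: Bp (r ++ q 0 i) (fun n => q (n + 1)) (fun j => f (j + 1)) (n + 1)
      rw [hshift]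
      have hcongr : Bp r q (fun j => if j = 0 then i else f (j - 1 + 1)) (n + 2)
          = Bp r q f (n + 2) := by
        apply Bp_congr
        intro j _
        rcases j with _ | j
        · simpa using hf0.symm
        · simp
      rw [hcongr]
      exact hp.trans (Bp_mono f (by omega))
    · -- t <+: r ++ [i]
      refine ⟨0, fun _ => false, ?_⟩
      show t <+: Bp (r ++ q 0 i) (fun n => q (n + 1)) (fun _ => false) 1
      have h1 : t <+: r ++ q 0 i := by
        apply h.trans
        exact (List.prefix_append_right_inj r).2 (cons_prefix_q hw 0 i)
      have h2 : (r ++ q 0 i) <+: Bp (r ++ q 0 i) (fun n => q (n + 1)) (fun _ => false) 1 := by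
        have := Bp_mono (r := r ++ q 0 i) (q := fun n => q (n + 1))
          (fun _ => false) (Nat.zero_le 1)
        rwa [Bp_zero] at this
      exact h1.trans h2
  · rintro ⟨n, g, hp⟩
    have hp' : t <+: Bp r q (fun j => if j = 0 then i else g (j - 1)) (n + 2) := by
      rw [← hshift]; exact hp
    refine ⟨(mem_iff hw).2 ⟨n + 1, _, hp'⟩, ?_⟩
    have hri : r ++ [i] <+: Bp (r ++ q 0 i) (fun n => q (n + 1)) g (n + 1) := by
      have h1 : r ++ [i] <+: r ++ q 0 i :=
        (List.prefix_append_right_inj r).2 (cons_prefix_q hw 0 i)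
      have h2 : (r ++ q 0 i) <+: Bp (r ++ q 0 i) (fun n => q (n + 1)) g (n + 1) := by
        have := Bp_mono (r := r ++ q 0 i) (q := fun n => q (n + 1)) g (Nat.zero_le (n+1))
        rwa [Bp_zero] at this
      exact h1.trans h2
    exact comp_of hri hp

end OneTree


/-! ### Iterated splitting -/

/-- One step of witness transformation corresponding to `split1`. -/
def wstep (rq : Str × (ℕ → Bool → Str)) (i : Bool) : Str × (ℕ → Bool → Str) :=
  (rq.1 ++ rq.2 0 i, fun n => rq.2 (n + 1))

lemma splitS_nil (T : Tr) : splitS T [] = T := rfl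

lemma splitS_cons (T : Tr) (i : Bool) (s : Str) :
    splitS T (i :: s) = splitS (split1 T i) s := rfl

lemma split1_subset (T : Tr) (i : Bool) : split1 T i ⊆ T := fun _ h => h.1

lemma splitS_subset (s : Str) : ∀ (T : Tr), splitS T s ⊆ T := by
  induction s with
  | nil => exact fun T _ h => h
  | cons i s ih =>
    intro T t ht
    exact split1_subset T i (ih (split1 T i) ht)

lemma splitS_wit {T : Tr} {r : Str} {q : ℕ → Bool → Str} (hw : LTwit T r q) (s : Str) :
    LTwit (splitS T s) (s.foldl wstep (r, q)).1 (s.foldl wstep (r, q)).2 := by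
  induction s generalizing T r q with
  | nil => exact hw
  | cons i s ih =>
    rw [splitS_cons]
    exact ih (split1_wit hw i)

lemma foldl_snd (s : Str) : ∀ (r : Str) (q : ℕ → Bool → Str),
    (s.foldl wstep (r, q)).2 = fun n => q (n + s.length) := by
  induction s with
  | nil => intro r q; funext n; simp
  | cons i s ih =>
    intro r q
    have h1 : (i :: s).foldl wstep (r, q) = s.foldl wstep (wstep (r, q) i) := rfl
    rw [h1, ih]
    funext n
    show q (n + s.length + 1) = q (n + (i :: s).length)
    have h2 : n + (i :: s).length = n + s.length + 1 := by
      simp only [List.length_cons]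
      omega
    rw [h2]

lemma splN_shift {T : Tr} {r : Str} {q : ℕ → Bool → Str} (hw : LTwit T r q) (i : Bool) :
    ∀ m, splN (r ++ q 0 i) (fun n => q (n + 1)) m = splN r q (m + 1) := by
  intro m
  induction m with
  | zero =>
    show (r ++ q 0 i).length = splN r q 1
    rw [List.length_append, qlen hw]
    rfl
  | succ m ih =>
    show splN (r ++ q 0 i) (fun n => q (n + 1)) m + (q (m + 1) false).length
      = splN r q (m + 1) + (q (m + 1) false).length
    rw [ih]

lemma path_len {T : Tr} {r : Str} {q : ℕ → Bool → Str} (hw : LTwit T r q) :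
    ∀ (s : Str), (s.foldl wstep (r, q)).1.length = splN r q s.length := by
  suffices h : ∀ (s : Str) (T : Tr) (r : Str) (q : ℕ → Bool → Str), LTwit T r q →
      (s.foldl wstep (r, q)).1.length = splN r q s.length by
    intro s; exact h s T r q hw
  intro s
  induction s with
  | nil => intro T r q _; rfl
  | cons i s ih =>
    intro T r q hw
    have h1 : (i :: s).foldl wstep (r, q) = s.foldl wstep (wstep (r, q) i) := rfl
    have hws : wstep (r, q) i = (r ++ q 0 i, fun n => q (n + 1)) := rfl
    rw [h1, hws]
    have h2 := ih (split1 T i) (r ++ q 0 i) (fun n => q (n + 1)) (split1_wit hw i)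
    rw [h2, splN_shift hw i]
    rfl

lemma path_snoc (s : Str) (i : Bool) (rq : Str × (ℕ → Bool → Str)) :
    (s ++ [i]).foldl wstep rq = wstep (s.foldl wstep rq) i := by
  rw [List.foldl_append]
  rfl

lemma stem_prefix_path (s : Str) : ∀ (rq : Str × (ℕ → Bool → Str)),
    rq.1 <+: (s.foldl wstep rq).1 := by
  induction s with
  | nil => exact fun rq => List.prefix_refl _
  | cons i s ih =>
    intro rq
    have h1 : (i :: s).foldl wstep rq = s.foldl wstep (wstep rq i) := rfl
    rw [h1]
    exact (List.prefix_append rq.1 (rq.2 0 i)).trans (ih (wstep rq i))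

lemma restr_restr {T : Tr} {v u : Str} (hvu : v <+: u) :
    restr (restr T v) u = restr T u := by
  ext t
  constructor
  · rintro ⟨⟨ht, _⟩, hc⟩
    exact ⟨ht, hc⟩
  · rintro ⟨ht, hc⟩
    refine ⟨⟨ht, ?_⟩, hc⟩
    rcases hc with h | h
    · exact Or.inl (hvu.trans h)
    · exact comp_of hvu h

lemma splitS_restr {T : Tr} {r : Str} {q : ℕ → Bool → Str} (hw : LTwit T r q) :
    ∀ (s : Str), splitS T s = restr T (s.foldl wstep (r, q)).1 := by
  suffices h : ∀ (s : Str) (T : Tr) (r : Str) (q : ℕ → Bool → Str), LTwit T r q →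
      splitS T s = restr T (s.foldl wstep (r, q)).1 by
    intro s; exact h s T r q hw
  intro s
  induction s with
  | nil => intro T r q hw; exact (restr_stem hw).symm
  | cons i s ih =>
    intro T r q hw
    have h1 : (i :: s).foldl wstep (r, q) = s.foldl wstep (wstep (r, q) i) := rfl
    rw [splitS_cons, h1, ih (split1 T i) _ _ (split1_wit hw i)]
    have hsp : split1 T i = restr T (r ++ [i]) := by rw [split1, stem_eq hw]
    rw [hsp]
    apply restr_restr
    have h2 : r ++ [i] <+: r ++ q 0 i :=
      (List.prefix_append_right_inj r).2 (cons_prefix_q hw 0 i)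
    exact h2.trans (stem_prefix_path s (wstep (r, q) i))


/-! ### Comparing two trees -/

lemma getD_append {a c : Str} {d : ℕ} (hd : d < c.length) :
    (a ++ c).getD (a.length + d) false = c.getD d false := by
  rw [List.getD_eq_getElem _ _ (by rw [List.length_append]; omega),
    List.getD_eq_getElem _ _ hd, List.getElem_append_right (by omega)]
  congr 1
  omega

lemma path_snoc' (r : Str) (q : ℕ → Bool → Str) (s : Str) (i : Bool) :
    ((s ++ [i]).foldl wstep (r, q)).1 = (s.foldl wstep (r, q)).1 ++ q s.length i := by
  rw [path_snoc]
  show (s.foldl wstep (r, q)).1 ++ (s.foldl wstep (r, q)).2 0 i = _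
  rw [foldl_snd]
  norm_num

section TwoTrees

variable {S T : Tr} {rS rT : Str} {qS qT : ℕ → Bool → Str}

lemma stem_le (hwS : LTwit S rS qS) (hwT : LTwit T rT qT) (hsub : S ⊆ T) : rT <+: rS := by
  have hrs : rS ∈ T := hsub (stem_mem' hwS)
  rcases mem_comp_stem hwT hrs with h | h
  · rcases Nat.eq_or_lt_of_le h.length_le with heq | hlt
    · rw [h.eq_of_length heq]
    · exfalso
      have hchild : ∀ i : Bool, rS ++ [i] <+: rT := by
        intro i
        have hci : rS ++ [i] ∈ T := hsub (splitnode hwS (stem_mem' hwS) (k := 0) rfl i)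
        rcases mem_comp_stem hwT hci with h' | h'
        · exact h'
        · have hlen : rT.length = (rS ++ [i]).length := by
            have := h'.length_le
            simp only [List.length_append, List.length_singleton] at this ⊢
            omega
          rw [h'.eq_of_length hlen]
      have h0 := hchild false
      have h1 := hchild true
      have heq2 : rS ++ [false] = rS ++ [true] := by
        rcases comp_of h0 h1 with h' | h'
        · exact h'.eq_of_length (by simp)
        · exact (h'.eq_of_length (by simp)).symm
      have := List.append_cancel_left heq2
      simp at this
  · exact h

lemma splS_mem (hwS : LTwit S rS qS) (hwT : LTwit T rT qT) (hsub : S ⊆ T) (k : ℕ) :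
    ∃ m, splN rS qS k = splN rT qT m := by
  set t := Bp rS qS (fun _ => false) k with htdef
  have ht : t ∈ S := mem_Bp hwS _ k
  have hl : t.length = splN rS qS k := Bp_length hwS _ k
  obtain ⟨m, hm⟩ := splitlevel hwT (hsub (splitnode hwS ht hl false))
    (hsub (splitnode hwS ht hl true))
  exact ⟨m, by rw [← hl, hm]⟩

lemma spl_ge (hwS : LTwit S rS qS) (hwT : LTwit T rT qT) (hsub : S ⊆ T) {k : ℕ}
    (ih : ∀ j < k, splN rS qS j = splN rT qT j) : splN rT qT k ≤ splN rS qS k := by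
  obtain ⟨m, hm⟩ := splS_mem hwS hwT hsub k
  rcases Nat.eq_zero_or_pos k with h0 | h0
  · subst h0
    rw [hm]
    exact (splN_strict hwT).monotone (Nat.zero_le m)
  · have hlt : splN rT qT (k - 1) < splN rT qT m := by
      rw [← hm, ← ih (k - 1) (by omega)]
      exact splN_strict hwS (by omega)
    have hkm : k - 1 < m := (splN_strict hwT).lt_iff_lt.1 hlt
    rw [hm]
    exact (splN_strict hwT).monotone (by omega)

lemma imp_a_b (hwS : LTwit S rS qS) (hwT : LTwit T rT qT) (n : ℕ) (hsub : S ⊆ T)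
    (hspl : ∀ k < n, splN rS qS k = splN rT qT k) :
    ∀ s : Str, s.length ≤ n → splitS S s ⊆ splitS T s := by
  have clm : ∀ s : Str, s.length ≤ n →
      (s.foldl wstep (rT, qT)).1 <+: (s.foldl wstep (rS, qS)).1 := by
    intro s
    induction s using List.reverseRecOn with
    | nil => exact fun _ => stem_le hwS hwT hsub
    | append_singleton s i ih =>
      intro hlen
      rw [List.length_append, List.length_singleton] at hlen
      have hslen : s.length < n := by omega
      have hpre := ih (le_of_lt hslen)
      have hlenT : (s.foldl wstep (rT, qT)).1.length = splN rT qT s.length := path_len hwT s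
      have hlenS : (s.foldl wstep (rS, qS)).1.length = splN rS qS s.length := path_len hwS s
      have heq : (s.foldl wstep (rT, qT)).1 = (s.foldl wstep (rS, qS)).1 :=
        hpre.eq_of_length (by rw [hlenT, hlenS, hspl s.length hslen])
      have hsnocS := path_snoc' rS qS s i
      have hsnocT := path_snoc' rT qT s i
      set pS' := ((s ++ [i]).foldl wstep (rS, qS)).1 with hpS'
      set pT' := ((s ++ [i]).foldl wstep (rT, qT)).1 with hpT'
      set u := (s.foldl wstep (rS, qS)).1 ++ [i] with hudef
      have huS : u <+: pS' := by
        rw [hsnocS]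
        exact (List.prefix_append_right_inj _).2 (cons_prefix_q hwS s.length i)
      have huT : u <+: pT' := by
        rw [hsnocT, heq]
        exact (List.prefix_append_right_inj _).2 (cons_prefix_q hwT s.length i)
      have hlenS' : pS'.length = splN rS qS (s.length + 1) := by
        have := path_len hwS (s ++ [i])
        rw [List.length_append, List.length_singleton] at this
        exact this
      have hlenT' : pT'.length = splN rT qT (s.length + 1) := by
        have := path_len hwT (s ++ [i])
        rw [List.length_append, List.length_singleton] at this
        exact this
      have hge : splN rT qT (s.length + 1) ≤ splN rS qS (s.length + 1) :=
        spl_ge hwS hwT hsub (fun j hj => hspl j (by omega))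
      set v := pS'.take (splN rT qT (s.length + 1)) with hvdef
      have hvp : v <+: pS' := List.take_prefix _ _
      have hvlen : v.length = splN rT qT (s.length + 1) := by
        rw [hvdef, List.length_take, hlenS']
        omega
      have hpS'S : pS' ∈ S := splitS_subset (s ++ [i]) S (stem_mem' (splitS_wit hwS (s ++ [i])))
      have hvT : v ∈ T := mem_down hwT (hsub hpS'S) hvp
      have hpT'T : pT' ∈ T := splitS_subset (s ++ [i]) T (stem_mem' (splitS_wit hwT (s ++ [i])))
      have hulen : u.length = splN rT qT s.length + 1 := by
        rw [hudef, List.length_append, List.length_singleton, hlenS, hspl s.length hslen]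
      have hsucc : splN rT qT s.length < splN rT qT (s.length + 1) := splN_strict hwT (by omega)
      have huv : u <+: v :=
        List.prefix_of_prefix_length_le huS hvp (by rw [hulen, hvlen]; omega)
      rcases agree hwT hvT hpT'T huv huT (by omega) (le_of_eq hvlen) (le_of_eq hlenT')
        with h | h
      · rw [← h.eq_of_length (hvlen.trans hlenT'.symm)]
        exact hvp
      · exact h.trans hvp
  intro s hs t ht
  rw [splitS_restr hwS s] at ht
  rw [splitS_restr hwT s]
  obtain ⟨htS, hc⟩ := ht
  refine ⟨hsub htS, ?_⟩
  have hcl := clm s hs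
  rcases hc with h | h
  · exact Or.inl (hcl.trans h)
  · exact comp_of hcl h

lemma imp_b_a (hwS : LTwit S rS qS) (hwT : LTwit T rT qT) (n : ℕ)
    (hB : ∀ s : Str, s.length ≤ n → splitS S s ⊆ splitS T s) :
    S ⊆ T ∧ ∀ k < n, splN rS qS k = splN rT qT k := by
  have hsub : S ⊆ T := by
    have := hB [] (Nat.zero_le n)
    rwa [splitS_nil, splitS_nil] at this
  refine ⟨hsub, ?_⟩
  intro k
  induction k using Nat.strong_induction_on with
  | _ k ih =>
  intro hk
  have hge : splN rT qT k ≤ splN rS qS k :=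
    spl_ge hwS hwT hsub (fun j hj => ih j hj (by omega))
  rcases Nat.eq_or_lt_of_le hge with heq | hlt
  · exact heq.symm
  exfalso
  set s : Str := List.replicate k false with hs
  have hslen : s.length = k := List.length_replicate (n := k) (a := false)
  set pS := (s.foldl wstep (rS, qS)).1 with hpS
  set pT := (s.foldl wstep (rT, qT)).1 with hpT
  have hlenS : pS.length = splN rS qS k := by rw [hpS, path_len hwS, hslen]
  have hlenT : pT.length = splN rT qT k := by rw [hpT, path_len hwT, hslen]
  have hpSmem : pS ∈ splitS T s :=
    hB s (by omega) (stem_mem' (splitS_wit hwS s))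
  have hpre : pT <+: pS := by
    have hcomp0 := mem_comp_stem (splitS_wit hwT s) hpSmem
    rw [← hpT] at hcomp0
    rcases hcomp0 with h | h
    · exfalso
      have := h.length_le
      omega
    · exact h
  set b := pS.getD (splN rT qT k) false with hb
  set i := !b with hi
  set s' := s ++ [i] with hs'
  have hs'len : s'.length = k + 1 := by rw [hs', List.length_append, hslen]; rfl
  set pS' := (s'.foldl wstep (rS, qS)).1 with hpS'
  set pT' := (s'.foldl wstep (rT, qT)).1 with hpT'
  have hsnocS : pS' = pS ++ qS s.length i := path_snoc' rS qS s i
  have hsnocT : pT' = pT ++ qT s.length i := path_snoc' rT qT s i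
  have hlenS' : pS'.length = splN rS qS (k + 1) := by rw [hpS', path_len hwS, hs'len]
  have hlenT' : pT'.length = splN rT qT (k + 1) := by rw [hpT', path_len hwT, hs'len]
  have hpS'mem : pS' ∈ splitS T s' :=
    hB s' (by omega) (stem_mem' (splitS_wit hwS s'))
  have hcomp' := mem_comp_stem (splitS_wit hwT s') hpS'mem
  rw [← hpT'] at hcomp'
  have hsucc : splN rT qT k < splN rT qT (k + 1) := splN_strict hwT (by omega)
  have hplt2 : splN rT qT k < pS.length := by omega
  have hpltT' : splN rT qT k < pT'.length := by omega
  have hpltS' : splN rT qT k < pS'.length := by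
    have : splN rS qS k < splN rS qS (k + 1) := splN_strict hwS (by omega)
    omega
  have hbT : pT'.getD (splN rT qT k) false = i := by
    rw [hsnocT, hslen]
    have h1 := getD_append (a := pT) (c := qT k i) (d := 0) (qne hwT k i)
    rw [hlenT] at h1
    rw [Nat.add_zero] at h1
    rw [h1, qhead hwT]
  have hbS : pS'.getD (splN rT qT k) false = b := by
    have hpp : pS <+: pS' := by rw [hsnocS]; exact List.prefix_append _ _
    rw [getD_of_prefix hpp hplt2]
  have hbib : b = i := by
    rcases hcomp' with h | h
    · rw [← hbT, ← hbS, getD_of_prefix h hpltS']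
    · rw [← hbT, ← hbS, getD_of_prefix h hpltT']
  rw [hi] at hbib
  cases b <;> simp at hbib

lemma imp_a_c (hwS : LTwit S rS qS) (hwT : LTwit T rT qT) (n : ℕ) (hsub : S ⊆ T)
    (hspl : ∀ k < n, splN rS qS k = splN rT qT k) :
    {u | u ∈ S ∧ u.length = splN rT qT n} = {u | u ∈ T ∧ u.length = splN rT qT n} := by
  have claim : ∀ k, k ≤ n → ∀ t, t ∈ T → t.length = splN rT qT k → t ∈ S := by
    intro k
    induction k with
    | zero =>
      intro _ t ht hlen
      have hlen0 : t.length = rT.length := hlen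
      have htrT : t = rT := by
        rcases mem_comp_stem hwT ht with h | h
        · exact h.eq_of_length hlen0
        · exact (h.eq_of_length hlen0.symm).symm
      rw [htrT]
      exact mem_down hwS (stem_mem' hwS) (stem_le hwS hwT hsub)
    | succ k ihk =>
      intro hk1 t ht hlen
      have hk : k < n := by omega
      have hsucc : splN rT qT k < splN rT qT (k + 1) := splN_strict hwT (by omega)
      set u := t.take (splN rT qT k) with hu
      have hut : u <+: t := List.take_prefix _ _
      have hulen : u.length = splN rT qT k := by
        rw [hu, List.length_take, hlen]
        omega
      have huS : u ∈ S := ihk (by omega) u (mem_down hwT ht hut) hulen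
      set i := t.getD (splN rT qT k) false with hi
      have hlenS : u.length = splN rS qS k := by rw [hulen, ← hspl k hk]
      have hui : u ++ [i] ∈ S := splitnode hwS huS hlenS i
      have huit : u ++ [i] <+: t := by
        have h1 := snoc_prefix_of hut (by omega : u.length < t.length)
        rwa [hulen] at h1
      obtain ⟨v, hvS, huiv, hvlen⟩ := mem_extend hwS hui
        (m := splN rT qT (k + 1)) (by rw [List.length_append, List.length_singleton]; omega)
      have hvT : v ∈ T := hsub hvS
      have huilen : splN rT qT k < (u ++ [i]).length := by
        rw [List.length_append, List.length_singleton]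
        omega
      rcases agree hwT hvT ht huiv huit huilen (le_of_eq hvlen) (le_of_eq hlen) with h | h
      · rw [← h.eq_of_length (hvlen.trans hlen.symm)]
        exact hvS
      · rw [h.eq_of_length (hlen.trans hvlen.symm)]
        exact hvS
  ext u
  constructor
  · rintro ⟨hu, hlen⟩
    exact ⟨hsub hu, hlen⟩
  · rintro ⟨hu, hlen⟩
    exact ⟨claim n le_rfl u hu hlen, hlen⟩

lemma imp_c_a (hwS : LTwit S rS qS) (hwT : LTwit T rT qT) (n : ℕ) (hsub : S ⊆ T)
    (hlev : {u | u ∈ S ∧ u.length = splN rT qT n} = {u | u ∈ T ∧ u.length = splN rT qT n}) :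
    ∀ k < n, splN rS qS k = splN rT qT k := by
  intro k
  induction k using Nat.strong_induction_on with
  | _ k ih =>
  intro hk
  have hge : splN rT qT k ≤ splN rS qS k :=
    spl_ge hwS hwT hsub (fun j hj => ih j hj (by omega))
  set t := Bp rT qT (fun _ => false) k with htdef
  have ht : t ∈ T := mem_Bp hwT _ k
  have hlen : t.length = splN rT qT k := Bp_length hwT _ k
  have hkn : splN rT qT k < splN rT qT n := splN_strict hwT hk
  have hchildS : ∀ i : Bool, t ++ [i] ∈ S := by
    intro i
    have hci : t ++ [i] ∈ T := splitnode hwT ht hlen i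
    obtain ⟨v, hvT, hciV, hvlen⟩ := mem_extend hwT hci
      (m := splN rT qT n) (by rw [List.length_append, List.length_singleton]; omega)
    have hvS : v ∈ S := by
      have : v ∈ {u | u ∈ S ∧ u.length = splN rT qT n} := by
        rw [hlev]
        exact ⟨hvT, hvlen⟩
      exact this.1
    exact mem_down hwS hvS hciV
  have htS : t ∈ S := mem_down hwS (hchildS false) (List.prefix_append _ _)
  obtain ⟨j, hj⟩ := splitlevel hwS (hchildS false) (hchildS true)
  have hle : splN rS qS k ≤ splN rT qT k := by
    rcases Nat.eq_zero_or_pos k with h0 | h0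
    · subst h0
      rw [← hlen, hj]
      exact (splN_strict hwS).monotone (Nat.zero_le j)
    · have h1 : splN rS qS (k - 1) < splN rS qS j := by
        rw [← hj, hlen, ih (k - 1) (by omega) (by omega)]
        exact splN_strict hwT (by omega)
      have h2 : k - 1 < j := (splN_strict hwS).lt_iff_lt.1 h1
      calc splN rS qS k ≤ splN rS qS j := (splN_strict hwS).monotone (by omega)
        _ = splN rT qT k := by rw [← hj, hlen]
  omega

end TwoTrees


/-- Lemma `sadd`(2): for E0-large trees `S, T`, `n < ω`, `h = spl_n(T)`:
`S ⊆_n T` iff `S→s ⊆ T→s` for all `s` of length ≤ n, iff `S ⊆ T` and `S ∩ 2^h = T ∩ 2^h`. -/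
theorem stmt6 (S T : Tr) (hS : IsLT S) (hT : IsLT T) (n h : ℕ) (hh : h = spl T n) :
    (subN n S T ↔ ∀ s : Str, s.length ≤ n → splitS S s ⊆ splitS T s) ∧
    (subN n S T ↔ S ⊆ T ∧ {u ∈ S | u.length = h} = {u ∈ T | u.length = h}) := by
  obtain ⟨rS, qS, hwS⟩ := hS
  obtain ⟨rT, qT, hwT⟩ := hT
  subst hh
  constructor
  · constructor
    · rintro ⟨hsub, hspl⟩
      exact imp_a_b hwS hwT n hsub
        (fun k hk => by rw [← spl_eq hwS k, ← spl_eq hwT k]; exact hspl k hk)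
    · intro hB
      obtain ⟨hsub, hspl⟩ := imp_b_a hwS hwT n hB
      exact ⟨hsub, fun k hk => by
        rw [spl_eq hwS k, spl_eq hwT k]; exact hspl k hk⟩
  · constructor
    · rintro ⟨hsub, hspl⟩
      refine ⟨hsub, ?_⟩
      have hres := imp_a_c hwS hwT n hsub
        (fun k hk => by rw [← spl_eq hwS k, ← spl_eq hwT k]; exact hspl k hk)
      rw [spl_eq hwT n]
      exact hres
    · rintro ⟨hsub, hlev⟩
      refine ⟨hsub, ?_⟩
      intro k hk
      rw [spl_eq hwS k, spl_eq hwT k]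
      refine imp_c_a hwS hwT n hsub ?_ k hk
      rw [spl_eq hwT n] at hlev
      exact hlev

end E0L
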